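/- Let A be a commutative ring, M an A-module, p a prime, i ≥ 0, and suppose given a_u ∈ A ⊗ Q and m_u ∈ M ⊗ Q for u = 0,…,i(p-1) with v_p(a_u) ≥ -⌊u/(p-1)⌋ and v_p(m_u) ≥ -⌊u/(p-1)⌋. Then each term p^i·a_u·m_{i(p-1)-u} lies in the image of M ⊗ Z_(p), and in (image of M ⊗ Z_(p) in M ⊗ Q) ⊗ Z/p one has Σ_{u=0}^{i(p-1)} p^i·a_u·m_{i(p-1)-u} = Σ_{j=0}^{i} (p^j·a_{j(p-1)}) · (p^{i-j}·m_{(i-j)(p-1)}). -/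

import Mathlib

open TensorProduct Pointwise

/-- `N_{ℤ_(p)⊂ℚ}`: the image of `N ⊗ ℤ_(p) → N ⊗ ℚ`, generated by the elements
`(1/m) ⊗ x` with `m` prime to `p`. -/
noncomputable def imZp (p : ℕ) (N : Type*) [AddCommGroup N] : Submodule ℤ (ℚ ⊗[ℤ] N) :=
  Submodule.span ℤ {y | ∃ (x : N) (m : ℤ), ¬ ((p : ℤ) ∣ m) ∧ y = ((m : ℚ))⁻¹ ⊗ₜ[ℤ] x}

/-- The `ℤ`-bilinear multiplication `(A ⊗ ℚ) × (M ⊗ ℚ) → M ⊗ ℚ`,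
`(q ⊗ a)·(r ⊗ m) = qr ⊗ (a • m)`, for `M` a module over a commutative ring `A`. -/
noncomputable def mulQ (A M : Type*) [CommRing A] [AddCommGroup M] [Module A M] :
    (ℚ ⊗[ℤ] A) →ₗ[ℤ] (ℚ ⊗[ℤ] M) →ₗ[ℤ] (ℚ ⊗[ℤ] M) :=
  TensorProduct.lift <| LinearMap.mk₂ ℤ
    (fun q a => TensorProduct.map ((LinearMap.mul ℤ ℚ) q)
      ((LinearMap.mk₂ ℤ (fun (a : A) (m : M) => a • m)
        (fun _ _ _ => add_smul _ _ _) (fun _ _ _ => smul_assoc _ _ _)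
        (fun _ _ _ => smul_add _ _ _) (fun c a m => smul_comm a c m)) a))
    (by intro q₁ q₂ a
        simp only [map_add, TensorProduct.map_add_left] <;> rfl)
    (by intro c q a
        simp only [map_smul, TensorProduct.map_smul_left] <;> rfl)
    (by intro q a₁ a₂
        simp only [map_add, TensorProduct.map_add_right] <;> rfl)
    (by intro c q a
        simp only [map_smul, TensorProduct.map_smul_right] <;> rfl)

/-- Given `a_u ∈ A ⊗ ℚ`, `m_u ∈ M ⊗ ℚ` for `0 ≤ u ≤ i(p-1)` with
`v_p(a_u) ≥ -⌊u/(p-1)⌋` and `v_p(m_u) ≥ -⌊u/(p-1)⌋` (i.e. `p^{⌊u/(p-1)⌋}` times the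
element lies in the image of the `ℤ_(p)`-form), each term `p^i·a_u·m_{i(p-1)-u}` lies in
`M_{ℤ_(p)⊂ℚ}`, and in `M_{ℤ_(p)⊂ℚ} ⊗ ℤ/p` (i.e. modulo `p·M_{ℤ_(p)⊂ℚ}`) one has
`∑_{u=0}^{i(p-1)} p^i·a_u·m_{i(p-1)-u} = ∑_{j=0}^{i} (p^j·a_{j(p-1)})·(p^{i-j}·m_{(i-j)(p-1)})`. -/
lemma qsmul_eq (p : ℕ) (N : Type*) [AddCommGroup N] (n : ℕ) (x : ℚ ⊗[ℤ] N) :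
    ((p:ℚ)^n) • x = ((p:ℤ)^n) • x := by
  rw [show ((p:ℚ)^n) = (((p^n : ℤ) : ℚ)) by push_cast; ring, Int.cast_smul_eq_zsmul]
lemma mulQ_mem (p : ℕ) (hp : p.Prime) (A M : Type*) [CommRing A] [AddCommGroup M] [Module A M]
    {x : ℚ ⊗[ℤ] A} {y : ℚ ⊗[ℤ] M} (hx : x ∈ imZp p A) (hy : y ∈ imZp p M) :
    mulQ A M x y ∈ imZp p M := by
  have hpz : Prime (p : ℤ) := Nat.prime_iff_prime_int.mp hp
  have H : imZp p A ≤ Submodule.comap ((mulQ A M).flip y) (imZp p M) := by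
    apply Submodule.span_le.mpr
    rintro _ ⟨x₀, n, hn, rfl⟩
    simp only [SetLike.mem_coe, Submodule.mem_comap, LinearMap.flip_apply]
    have H2 : imZp p M ≤ Submodule.comap (mulQ A M ((n:ℚ)⁻¹ ⊗ₜ[ℤ] x₀)) (imZp p M) := by
      apply Submodule.span_le.mpr
      rintro _ ⟨y₀, k, hk, rfl⟩
      simp only [SetLike.mem_coe, Submodule.mem_comap]
      have : mulQ A M ((n:ℚ)⁻¹ ⊗ₜ[ℤ] x₀) ((k:ℚ)⁻¹ ⊗ₜ[ℤ] y₀)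
          = (((n*k : ℤ):ℚ))⁻¹ ⊗ₜ[ℤ] (x₀ • y₀) := by
        simp [mulQ]
        rw [mul_comm]
        rfl
      rw [this]
      exact Submodule.subset_span ⟨x₀ • y₀, n*k,
        fun h => (hpz.dvd_mul.mp h).elim hn hk, rfl⟩
    exact H2 hy
  exact H hx
lemma pow_mulQ_mem (p : ℕ) (hp : p.Prime) (A M : Type*)
    [CommRing A] [AddCommGroup M] [Module A M]
    (n k k' : ℕ) (hkk : k + k' ≤ n) {x : ℚ ⊗[ℤ] A} {y : ℚ ⊗[ℤ] M}
    (hx : ((p:ℤ)^k) • x ∈ imZp p A) (hy : ((p:ℤ)^k') • y ∈ imZp p M) :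
    ((p:ℤ)^n) • mulQ A M x y ∈ imZp p M := by
  have : ((p:ℤ)^n) • mulQ A M x y
      = ((p:ℤ)^(n - (k + k'))) • mulQ A M (((p:ℤ)^k) • x) (((p:ℤ)^k') • y) := by
    rw [LinearMap.map_smul₂, map_smul, smul_smul, smul_smul, ← pow_add, ← pow_add,
      show n - (k + k') + k + k' = n from by omega]
  rw [this]
  exact Submodule.smul_mem _ _ (mulQ_mem p hp A M hx hy)

theorem stmt_15 (p : ℕ) (hp : p.Prime) (i : ℕ)
    (A M : Type*) [CommRing A] [AddCommGroup M] [Module A M]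
    (a : ℕ → ℚ ⊗[ℤ] A) (m : ℕ → ℚ ⊗[ℤ] M)
    (ha : ∀ u ≤ i * (p - 1), ((p : ℚ) ^ (u / (p - 1))) • a u ∈ imZp p A)
    (hm : ∀ u ≤ i * (p - 1), ((p : ℚ) ^ (u / (p - 1))) • m u ∈ imZp p M) :
    (∀ u ≤ i * (p - 1),
        ((p : ℚ) ^ i) • mulQ A M (a u) (m (i * (p - 1) - u)) ∈ imZp p M) ∧
      (∑ u ∈ Finset.range (i * (p - 1) + 1),
          ((p : ℚ) ^ i) • mulQ A M (a u) (m (i * (p - 1) - u)))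
        - (∑ j ∈ Finset.range (i + 1),
            mulQ A M (((p : ℚ) ^ j) • a (j * (p - 1))) (((p : ℚ) ^ (i - j)) • m ((i - j) * (p - 1))))
∈ (p : ℤ) • imZp p M := by
  have hq : 0 < p - 1 := by have := hp.two_le; omega
  set N := i * (p - 1) with hN
  -- part 1
  have part1 : ∀ u ≤ N, ((p : ℚ) ^ i) • mulQ A M (a u) (m (N - u)) ∈ imZp p M := by
    intro u hu
    have hkk : u / (p-1) + (N - u) / (p-1) ≤ i := by
      have h1 : (u / (p-1) + (N - u) / (p-1)) * (p-1) ≤ i * (p-1) := by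
        calc (u / (p-1) + (N - u) / (p-1)) * (p-1)
            = u / (p-1) * (p-1) + (N - u) / (p-1) * (p-1) := add_mul _ _ _
          _ ≤ u + (N - u) := add_le_add (Nat.div_mul_le_self _ _) (Nat.div_mul_le_self _ _)
          _ = N := by omega
      exact Nat.le_of_mul_le_mul_right h1 hq
    rw [qsmul_eq]
    refine pow_mulQ_mem p hp A M i _ _ hkk ?_ ?_
    · rw [← qsmul_eq]; exact ha u hu
    · rw [← qsmul_eq]; exact hm (N - u) (by omega)
  refine ⟨part1, ?_⟩
  -- part 2
  have hsplit : (∑ u ∈ Finset.range (N + 1), ((p : ℚ) ^ i) • mulQ A M (a u) (m (N - u)))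
      = (∑ u ∈ (Finset.range (N + 1)).filter (fun u => (p-1) ∣ u),
            ((p : ℚ) ^ i) • mulQ A M (a u) (m (N - u)))
        + (∑ u ∈ (Finset.range (N + 1)).filter (fun u => ¬ (p-1) ∣ u),
            ((p : ℚ) ^ i) • mulQ A M (a u) (m (N - u))) :=
    (Finset.sum_filter_add_sum_filter_not _ _ _).symm
  have hdiv : (∑ u ∈ (Finset.range (N + 1)).filter (fun u => (p-1) ∣ u),
          ((p : ℚ) ^ i) • mulQ A M (a u) (m (N - u)))
      = ∑ j ∈ Finset.range (i + 1),
          mulQ A M (((p : ℚ) ^ j) • a (j * (p - 1))) (((p : ℚ) ^ (i - j)) • m ((i - j) * (p - 1))) := by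
    refine Finset.sum_nbij' (fun u => u / (p-1)) (fun j => j * (p-1)) ?_ ?_ ?_ ?_ ?_
    · intro u hu
      simp only [Finset.mem_filter, Finset.mem_range] at hu ⊢
      obtain ⟨h1, c, rfl⟩ := hu
      rw [Nat.mul_div_cancel_left _ hq]  -- (p-1)*c case? careful: c is such that u = (p-1)*c
      have hci : c ≤ i := Nat.le_of_mul_le_mul_left (by rw [hN, mul_comm i] at h1; omega) hq
      omega
    · intro j hj
      simp only [Finset.mem_range] at hj
      simp only [Finset.mem_filter, Finset.mem_range]
      exact ⟨by have : j * (p-1) ≤ i * (p-1) := Nat.mul_le_mul_right _ (by omega); omega,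
        dvd_mul_left _ _⟩
    · intro u hu
      simp only [Finset.mem_filter, Finset.mem_range] at hu
      obtain ⟨h1, c, rfl⟩ := hu
      show (p-1) * c / (p-1) * (p-1) = (p-1) * c
      rw [Nat.mul_div_cancel_left _ hq, mul_comm]
    · intro j hj
      exact Nat.mul_div_cancel _ hq
    · intro u hu
      simp only [Finset.mem_filter, Finset.mem_range] at hu
      obtain ⟨h1, c, rfl⟩ := hu
      have hci : c ≤ i := Nat.le_of_mul_le_mul_left (by rw [hN, mul_comm i] at h1; omega) hq
      simp only [Nat.mul_div_cancel_left _ hq]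
      have h2 : N - (p-1) * c = (i - c) * (p-1) := by
        rw [hN, Nat.sub_mul i c (p-1), mul_comm c]
      rw [h2, qsmul_eq, qsmul_eq, qsmul_eq, LinearMap.map_smul₂, map_smul, smul_smul,
        ← pow_add, show c + (i - c) = i from by omega, show (p-1) * c = c * (p-1) from mul_comm _ _]
  rw [hsplit, hdiv, add_sub_cancel_left]
  refine Submodule.sum_mem _ ?_
  intro u hu
  simp only [Finset.mem_filter, Finset.mem_range] at hu
  obtain ⟨h1, hnd⟩ := hu
  have hr : u % (p-1) ≠ 0 := fun h => hnd (Nat.dvd_of_mod_eq_zero h)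
  have hmod : u / (p-1) * (p-1) + u % (p-1) = u := Nat.div_add_mod' u (p-1)
  have hki : u / (p-1) + (N - u) / (p-1) < i := by
    have h2 : (u / (p-1) + (N - u) / (p-1)) * (p-1) < i * (p-1) := by
      calc (u / (p-1) + (N - u) / (p-1)) * (p-1)
          = u / (p-1) * (p-1) + (N - u) / (p-1) * (p-1) := add_mul _ _ _
        _ ≤ (u - u % (p-1)) + (N - u) :=
            add_le_add (le_of_eq (by omega)) (Nat.div_mul_le_self _ _)
        _ < N := by omega
    exact Nat.lt_of_mul_lt_mul_right h2
  have hi1 : 1 ≤ i := lt_of_le_of_lt (Nat.zero_le _) hki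
  have hterm : ((p : ℚ) ^ i) • mulQ A M (a u) (m (N - u))
      = (p : ℤ) • (((p:ℤ)^(i-1)) • mulQ A M (a u) (m (N - u))) := by
    rw [qsmul_eq, smul_smul, ← pow_succ',
      show (i - 1) + 1 = i from by omega]
  rw [hterm]
  refine Submodule.smul_mem_pointwise_smul _ _ _ ?_
  exact pow_mulQ_mem p hp A M (i-1) (u / (p-1)) ((N - u) / (p-1)) (by omega)
    (by rw [← qsmul_eq]; exact ha u (by omega))
    (by rw [← qsmul_eq]; exact hm (N - u) (by omega))
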